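/- The set 𝕍 of Young measures on [0,T] × A is compact for the topology of weak convergence: every sequence (μ_n) of finite nonnegative Borel measures on [0,T] × A whose pushforwards under the projection (t,a) ↦ t all equal Lebesgue measure on [0,T] admits a subsequence converging weakly to a measure μ ∈ 𝕍. -/

import Mathlib

open MeasureTheory Filter Topology
open scoped NNReal ENNReal

section Aux
open Metric Set TopologicalSpace

/-- Prokhorov-type sequential compactness for probability measures concentrated on a
fixed compact set, in a second-countable metric space. -/
theorem prokhorov_seq_compact_aux {Ω : Type*} [MetricSpace Ω] [SecondCountableTopology Ω]
    [MeasurableSpace Ω] [BorelSpace Ω]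
    (K₀ : Set Ω) (hK₀ : IsCompact K₀)
    (P : ℕ → ProbabilityMeasure Ω) (hP : ∀ n, (P n : Measure Ω) K₀ᶜ = 0) :
    ∃ φ : ℕ → ℕ, StrictMono φ ∧ ∃ Plim : ProbabilityMeasure Ω,
      Tendsto (fun n => P (φ n)) atTop (𝓝 Plim) := by
  classical
  obtain ⟨D, hDc, hDd⟩ := TopologicalSpace.exists_countable_dense Ω
  haveI := hDc.to_subtype
  -- countable index for rational balls
  set β := D × {q : ℚ // 0 < q} with hβ
  let U : Finset β → Set Ω := fun F => ⋃ b ∈ F, ball (b.1 : Ω) ((b.2 : ℚ) : ℝ)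
  have U_open : ∀ F, IsOpen (U F) := fun F => isOpen_biUnion (fun _ _ => isOpen_ball)
  have U_union : ∀ F F', U (F ∪ F') = U F ∪ U F' := by
    intro F F'
    simp only [U, Finset.set_biUnion_union]
  have U_mono : ∀ {F F' : Finset β}, F ⊆ F' → U F ⊆ U F' := by
    intro F F' h
    refine Set.iUnion₂_subset fun b hb => ?_
    exact Set.subset_iUnion₂ (s := fun (b : β) (_ : b ∈ F') => ball (b.1 : Ω) ((b.2 : ℚ) : ℝ)) b (h hb)
  -- covering lemma
  have cov : ∀ (K G : Set Ω), IsCompact K → IsOpen G → K ⊆ G →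
      ∃ F, K ⊆ U F ∧ U F ⊆ G := by
    intro K G hK hG hKG
    have key : ∀ x ∈ K, ∃ b : β, x ∈ ball (b.1 : Ω) ((b.2 : ℚ) : ℝ) ∧
        ball (b.1 : Ω) ((b.2 : ℚ) : ℝ) ⊆ G := by
      intro x hx
      obtain ⟨r, hr, hrG⟩ := Metric.isOpen_iff.mp hG x (hKG hx)
      obtain ⟨q, hq0, hq⟩ := exists_rat_btwn (by linarith : (0:ℝ) < r/2)
      obtain ⟨d, hdD, hdist⟩ := hDd.exists_dist_lt x (by exact_mod_cast hq0 : (0:ℝ) < (q:ℝ))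
      refine ⟨(⟨d, hdD⟩, ⟨q, by exact_mod_cast hq0⟩), ?_, ?_⟩
      · simpa [Metric.mem_ball] using hdist
      · intro y hy
        apply hrG
        have h1 : dist y x ≤ dist y (d : Ω) + dist (d : Ω) x := dist_triangle _ _ _
        have h2 : dist y (d : Ω) < (q : ℝ) := Metric.mem_ball.mp hy
        have h3 : dist (d : Ω) x < (q : ℝ) := by rwa [dist_comm] at hdist
        exact Metric.mem_ball.mpr (by linarith)
    let γ := {b : β // ball (b.1 : Ω) ((b.2 : ℚ) : ℝ) ⊆ G}
    have hcover : K ⊆ ⋃ i : γ, ball ((i : β).1 : Ω) (((i : β).2 : ℚ) : ℝ) := by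
      intro x hx
      obtain ⟨b, hb1, hb2⟩ := key x hx
      exact Set.mem_iUnion.mpr ⟨⟨b, hb2⟩, hb1⟩
    obtain ⟨t, ht⟩ := hK.elim_finite_subcover (fun i : γ => ball ((i : β).1 : Ω) (((i : β).2 : ℚ) : ℝ))
      (fun i => isOpen_ball) hcover
    refine ⟨t.image Subtype.val, ?_, ?_⟩
    · intro x hx
      obtain ⟨i, hi, hxi⟩ := Set.mem_iUnion₂.mp (ht hx)
      exact Set.mem_iUnion₂.mpr ⟨i.val, Finset.mem_image_of_mem _ hi, hxi⟩
    · intro x hx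
      obtain ⟨b, hb, hxb⟩ := Set.mem_iUnion₂.mp hx
      obtain ⟨i, _, rfl⟩ := Finset.mem_image.mp hb
      exact i.2 hxb
  -- diagonal extraction
  let y : ℕ → (Finset β → Set.Icc (0:ℝ) 1) := fun n F =>
    ⟨((P n (U F) : ℝ≥0) : ℝ), ⟨(P n (U F)).coe_nonneg, by exact_mod_cast (P n).apply_le_one (U F)⟩⟩
  obtain ⟨ℓ, -, φ, hφ, hconv⟩ := isCompact_univ.tendsto_subseq (x := y) (fun n => Set.mem_univ _)
  have hcoord : ∀ F, Tendsto (fun n => ((P (φ n) (U F) : ℝ≥0) : ℝ)) atTop (𝓝 ((ℓ F : ℝ))) := by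
    intro F
    have h1 := (tendsto_pi_nhds.mp hconv) F
    exact (continuous_subtype_val.tendsto (ℓ F)).comp h1
  let m : Finset β → ℝ≥0 := fun F => ⟨(ℓ F : ℝ), (ℓ F).2.1⟩
  have hm : ∀ F, Tendsto (fun n => P (φ n) (U F)) atTop (𝓝 (m F)) := by
    intro F
    exact NNReal.tendsto_coe.mp (hcoord F)
  have m_le_one : ∀ F, m F ≤ 1 := by
    intro F
    rw [← NNReal.coe_le_coe]
    exact (ℓ F).2.2
  have m_mono : ∀ {F F' : Finset β}, U F ⊆ U F' → m F ≤ m F' := by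
    intro F F' h
    exact le_of_tendsto_of_tendsto' (hm F) (hm F') (fun n => (P (φ n)).apply_mono h)
  have m_add : ∀ {F F' : Finset β}, Disjoint (U F) (U F') → m (F ∪ F') = m F + m F' := by
    intro F F' hd
    have key : ∀ n, P (φ n) (U (F ∪ F')) = P (φ n) (U F) + P (φ n) (U F') := by
      intro n
      have h1 : ((P (φ n) (U (F ∪ F')) : ℝ≥0) : ℝ≥0∞)
          = ((P (φ n) (U F) : ℝ≥0) : ℝ≥0∞) + ((P (φ n) (U F') : ℝ≥0) : ℝ≥0∞) := by
        simp only [ProbabilityMeasure.ennreal_coeFn_eq_coeFn_toMeasure]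
        rw [U_union, measure_union hd (U_open F').measurableSet]
      exact_mod_cast h1
    exact tendsto_nhds_unique (hm (F ∪ F')) (((hm F).add (hm F')).congr (fun n => (key n).symm))
  have m_subadd : ∀ F F' : Finset β, m (F ∪ F') ≤ m F + m F' := by
    intro F F'
    refine le_of_tendsto_of_tendsto' (hm (F ∪ F')) ((hm F).add (hm F')) (fun n => ?_)
    have h1 : ((P (φ n) (U (F ∪ F')) : ℝ≥0) : ℝ≥0∞)
        ≤ ((P (φ n) (U F) : ℝ≥0) : ℝ≥0∞) + ((P (φ n) (U F') : ℝ≥0) : ℝ≥0∞) := by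
      simp only [ProbabilityMeasure.ennreal_coeFn_eq_coeFn_toMeasure]
      rw [U_union]
      exact measure_union_le _ _
    exact_mod_cast h1
  have m_one : ∀ F, K₀ ⊆ U F → m F = 1 := by
    intro F hF
    have key : ∀ n, P (φ n) (U F) = 1 := by
      intro n
      have h0 : (P (φ n) : Measure Ω) (U F)ᶜ = 0 :=
        measure_mono_null (compl_subset_compl.mpr hF) (hP _)
      have h1 : (P (φ n) : Measure Ω) (U F) = 1 :=
        (prob_compl_eq_zero_iff (U_open F).measurableSet).mp h0
      have h2 : ((P (φ n) (U F) : ℝ≥0) : ℝ≥0∞) = 1 := by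
        rw [ProbabilityMeasure.ennreal_coeFn_eq_coeFn_toMeasure]; exact h1
      exact_mod_cast h2
    exact tendsto_nhds_unique (hm F) (by simp only [key]; exact tendsto_const_nhds)
  -- the content
  let lam : Compacts Ω → ℝ≥0 := fun K => sInf (m '' {F | (K : Set Ω) ⊆ U F})
  have lam_ne : ∀ K : Compacts Ω, (m '' {F | (K : Set Ω) ⊆ U F}).Nonempty := by
    intro K
    obtain ⟨F, hF, -⟩ := cov K univ K.2 isOpen_univ (subset_univ _)
    exact ⟨m F, F, hF, rfl⟩
  have lam_le : ∀ (K : Compacts Ω) {F}, (K : Set Ω) ⊆ U F → lam K ≤ m F := by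
    intro K F hF
    exact csInf_le (OrderBot.bddBelow _) ⟨F, hF, rfl⟩
  have lam_le_one : ∀ K : Compacts Ω, lam K ≤ 1 := by
    intro K
    obtain ⟨F, hF, -⟩ := cov K univ K.2 isOpen_univ (subset_univ _)
    exact (lam_le K hF).trans (m_le_one F)
  have lam_mono : ∀ K₁ K₂ : Compacts Ω, (K₁ : Set Ω) ⊆ K₂ → lam K₁ ≤ lam K₂ := by
    intro K₁ K₂ h
    exact csInf_le_csInf (OrderBot.bddBelow _) (lam_ne K₂)
      (Set.image_mono (f := m) (fun F hF => h.trans hF))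
  have lam_sup_le : ∀ K₁ K₂ : Compacts Ω, lam (K₁ ⊔ K₂) ≤ lam K₁ + lam K₂ := by
    intro K₁ K₂
    refine le_of_forall_pos_le_add ?_
    intro ε hε
    obtain ⟨a1, ⟨F₁, hF₁, rfl⟩, h1⟩ := exists_lt_of_csInf_lt (lam_ne K₁)
      (lt_add_of_pos_right (lam K₁) (half_pos hε))
    obtain ⟨a2, ⟨F₂, hF₂, rfl⟩, h2⟩ := exists_lt_of_csInf_lt (lam_ne K₂)
      (lt_add_of_pos_right (lam K₂) (half_pos hε))
    have cover : ((K₁ ⊔ K₂ : Compacts Ω) : Set Ω) ⊆ U (F₁ ∪ F₂) := by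
      rw [U_union, Compacts.coe_sup]
      exact Set.union_subset_union hF₁ hF₂
    calc lam (K₁ ⊔ K₂) ≤ m (F₁ ∪ F₂) := lam_le _ cover
      _ ≤ m F₁ + m F₂ := m_subadd _ _
      _ ≤ (lam K₁ + ε / 2) + (lam K₂ + ε / 2) := add_le_add h1.le h2.le
      _ = lam K₁ + lam K₂ + ε := by
          rw [add_assoc, add_comm (ε / 2), add_assoc, add_halves ε, add_assoc]
  have lam_sup_ge : ∀ K₁ K₂ : Compacts Ω, Disjoint (K₁ : Set Ω) K₂ →
      lam K₁ + lam K₂ ≤ lam (K₁ ⊔ K₂) := by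
    intro K₁ K₂ hdis
    refine le_csInf (lam_ne _) ?_
    rintro x ⟨F, hF, rfl⟩
    obtain ⟨δ, hδ, hth⟩ := hdis.exists_thickenings K₁.2 K₂.2.isClosed
    have hsub : ((K₁ ⊔ K₂ : Compacts Ω) : Set Ω) = (K₁ : Set Ω) ∪ K₂ := Compacts.coe_sup _ _
    have h1 : (K₁ : Set Ω) ⊆ U F ∩ thickening δ K₁ :=
      subset_inter (subset_union_left.trans (hsub ▸ hF)) (self_subset_thickening hδ _)
    have h2 : (K₂ : Set Ω) ⊆ U F ∩ thickening δ K₂ :=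
      subset_inter (subset_union_right.trans (hsub ▸ hF)) (self_subset_thickening hδ _)
    obtain ⟨F₁, hF₁, hF₁'⟩ := cov K₁ _ K₁.2 ((U_open F).inter isOpen_thickening) h1
    obtain ⟨F₂, hF₂, hF₂'⟩ := cov K₂ _ K₂.2 ((U_open F).inter isOpen_thickening) h2
    have hdisU : Disjoint (U F₁) (U F₂) :=
      hth.mono (hF₁'.trans inter_subset_right) (hF₂'.trans inter_subset_right)
    calc lam K₁ + lam K₂ ≤ m F₁ + m F₂ := add_le_add (lam_le K₁ hF₁) (lam_le K₂ hF₂)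
      _ = m (F₁ ∪ F₂) := (m_add hdisU).symm
      _ ≤ m F := m_mono (by
          rw [U_union]
          exact Set.union_subset (hF₁'.trans inter_subset_left) (hF₂'.trans inter_subset_left))
  let μC : Content Ω :=
    { toFun := lam
      mono' := lam_mono
      sup_disjoint' := fun K₁ K₂ hd _ _ => le_antisymm (lam_sup_le K₁ K₂) (lam_sup_ge K₁ K₂ hd)
      sup_le' := lam_sup_le }
  -- key upper bound on opens
  have h_opens_ennreal : ∀ G : Set Ω, IsOpen G →
      μC.measure G ≤ atTop.liminf (fun n => (P (φ n) : Measure Ω) G) := by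
    intro G hG
    have e1 : μC.measure G = μC.innerContent ⟨G, hG⟩ := by
      rw [μC.measure_apply hG.measurableSet]
      exact μC.outerMeasure_opens ⟨G, hG⟩
    rw [e1]
    refine iSup₂_le ?_
    intro K hK
    obtain ⟨F, hKF, hFG⟩ := cov K G K.2 hG hK
    have h1 : (μC K : ℝ≥0∞) ≤ ((m F : ℝ≥0) : ℝ≥0∞) := ENNReal.coe_le_coe.mpr (lam_le K hKF)
    have h2 : Tendsto (fun n => (P (φ n) : Measure Ω) (U F)) atTop (𝓝 ((m F : ℝ≥0) : ℝ≥0∞)) := by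
      refine (ENNReal.tendsto_coe.mpr (hm F)).congr (fun n => ?_)
      rw [ProbabilityMeasure.ennreal_coeFn_eq_coeFn_toMeasure]
    have h3 : ((m F : ℝ≥0) : ℝ≥0∞) = atTop.liminf (fun n => (P (φ n) : Measure Ω) (U F)) :=
      h2.liminf_eq.symm
    refine h1.trans (h3.trans_le (liminf_le_liminf (Eventually.of_forall
      (fun n => measure_mono hFG))))
  -- probability
  have h_univ : μC.measure univ = 1 := by
    have e1 : μC.measure univ = μC.innerContent ⟨univ, isOpen_univ⟩ := by
      rw [μC.measure_apply MeasurableSet.univ]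
      exact μC.outerMeasure_opens ⟨univ, isOpen_univ⟩
    rw [e1]
    apply le_antisymm
    · refine iSup₂_le fun K _ => ?_
      show ((lam K : ℝ≥0) : ℝ≥0∞) ≤ 1
      exact_mod_cast lam_le_one K
    · have hl : lam ⟨K₀, hK₀⟩ = 1 := by
        apply le_antisymm (lam_le_one _)
        refine le_csInf (lam_ne _) ?_
        rintro x ⟨F, hF, rfl⟩
        exact (m_one F hF).ge
      have := le_iSup₂ (f := fun (K : Compacts Ω) (_ : (K : Set Ω) ⊆ (⟨univ, isOpen_univ⟩ : Opens Ω)) => (μC K : ℝ≥0∞))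
        ⟨K₀, hK₀⟩ (subset_univ _)
      refine le_trans ?_ this
      show (1 : ℝ≥0∞) ≤ ((lam ⟨K₀, hK₀⟩ : ℝ≥0) : ℝ≥0∞)
      rw [hl]
      simp
  haveI : IsProbabilityMeasure μC.measure := ⟨h_univ⟩
  let Plim : ProbabilityMeasure Ω := ⟨μC.measure, inferInstance⟩
  refine ⟨φ, hφ, Plim, ?_⟩
  apply MeasureTheory.tendsto_of_forall_isOpen_le_liminf
  intro G hG
  have obs := h_opens_ennreal G hG
  have aux : ((atTop.liminf (fun i => P (φ i) G) : ℝ≥0) : ℝ≥0∞) =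
      atTop.liminf ((fun z : ℝ≥0 => (z : ℝ≥0∞)) ∘ fun i => P (φ i) G) := by
    refine Monotone.map_liminf_of_continuousAt (F := atTop) ENNReal.coe_mono
      (fun i => P (φ i) G) ENNReal.continuous_coe.continuousAt ?_ ?_
    · exact IsBoundedUnder.isCoboundedUnder_ge ⟨1, by simp⟩
    · exact ⟨0, by simp⟩
  have obs' : ((Plim G : ℝ≥0) : ℝ≥0∞) ≤ ((atTop.liminf (fun i => P (φ i) G) : ℝ≥0) : ℝ≥0∞) := by
    rw [aux]
    refine le_trans ?_ (le_of_eq rfl)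
    rw [ProbabilityMeasure.ennreal_coeFn_eq_coeFn_toMeasure]
    refine obs.trans (le_of_eq ?_)
    congr 1
    funext n
    rw [Function.comp_apply, ProbabilityMeasure.ennreal_coeFn_eq_coeFn_toMeasure]
  exact_mod_cast obs'

end Aux


/-- The set 𝕍 of Young measures on [0,T] × A is (sequentially) compact
for the topology of weak convergence: every sequence of finite measures whose first
marginal is Lebesgue measure on [0,T] admits a subsequence converging weakly to a
Young measure. -/
theorem young_measures_compact
    {A : Type*} [MetricSpace A] [CompactSpace A] [Nonempty A]
    [MeasurableSpace A] [BorelSpace A]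
    (T : ℝ) (hT : 0 < T)
    (μ : ℕ → FiniteMeasure (ℝ × A))
    (hproj : ∀ n, ((μ n : Measure (ℝ × A)).map Prod.fst)
      = volume.restrict (Set.Icc 0 T)) :
    ∃ φ : ℕ → ℕ, StrictMono φ ∧ ∃ μlim : FiniteMeasure (ℝ × A),
      ((μlim : Measure (ℝ × A)).map Prod.fst) = volume.restrict (Set.Icc 0 T) ∧
      Tendsto (μ ∘ φ) atTop (𝓝 μlim) := by
  have huniv : ∀ n, (μ n : Measure (ℝ × A)) Set.univ = ENNReal.ofReal T := by
    intro n
    have h1 : ((μ n : Measure (ℝ × A)).map Prod.fst) Set.univ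
        = (μ n : Measure (ℝ × A)) Set.univ := by
      rw [Measure.map_apply measurable_fst MeasurableSet.univ, Set.preimage_univ]
    rw [← h1, hproj n, Measure.restrict_apply_univ, Real.volume_Icc, sub_zero]
  have hmass : ∀ n, (μ n).mass = T.toNNReal := by
    intro n
    have : ((μ n).mass : ℝ≥0∞) = ENNReal.ofReal T := by
      rw [FiniteMeasure.ennreal_mass]; exact huniv n
    have h2 := congrArg ENNReal.toNNReal this
    rw [ENNReal.toNNReal_coe, ENNReal.ofReal, ENNReal.toNNReal_coe] at h2; exact h2
  have hTnn : T.toNNReal ≠ 0 := (Real.toNNReal_pos.mpr hT).ne'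
  have hnonzero : ∀ n, μ n ≠ 0 := by
    intro n
    rw [← FiniteMeasure.mass_nonzero_iff, hmass n]
    exact hTnn
  -- Concentration on the compact set K₀
  set K₀ : Set (ℝ × A) := Set.Icc 0 T ×ˢ (Set.univ : Set A) with hK₀def
  have hK₀ : IsCompact K₀ := (isCompact_Icc).prod isCompact_univ
  have hK₀c : K₀ᶜ = Prod.fst ⁻¹' (Set.Icc 0 T)ᶜ := by
    ext p
    simp [hK₀def, Set.mem_prod]
  have hnull : ∀ n, (μ n : Measure (ℝ × A)) K₀ᶜ = 0 := by
    intro n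
    rw [hK₀c, ← Measure.map_apply measurable_fst measurableSet_Icc.compl, hproj n,
      Measure.restrict_apply measurableSet_Icc.compl, Set.compl_inter_self, measure_empty]
  -- Normalize to probability measures
  let P : ℕ → ProbabilityMeasure (ℝ × A) := fun n => (μ n).normalize
  have hPnull : ∀ n, (P n : Measure (ℝ × A)) K₀ᶜ = 0 := by
    intro n
    rw [show (P n : Measure (ℝ × A)) = ((μ n).mass)⁻¹ • (μ n : Measure (ℝ × A)) from
      (μ n).toMeasure_normalize_eq_of_nonzero (hnonzero n)]
    simp [hnull n]
  obtain ⟨φ, hφ, Plim, hPlim⟩ := prokhorov_seq_compact_aux K₀ hK₀ P hPnull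
  -- the limit finite measure
  let μlim : FiniteMeasure (ℝ × A) := T.toNNReal • Plim.toFiniteMeasure
  have hμmass : μlim.mass = T.toNNReal := by
    show μlim Set.univ = T.toNNReal
    rw [FiniteMeasure.smul_apply]
    simp [ProbabilityMeasure.coeFn_univ]
  have hμnonzero : μlim ≠ 0 := by
    rw [← FiniteMeasure.mass_nonzero_iff, hμmass]
    exact hTnn
  have hnormalize : μlim.normalize = Plim := by
    apply ProbabilityMeasure.eq_of_forall_apply_eq
    intro s _
    rw [FiniteMeasure.normalize_eq_of_nonzero _ hμnonzero, hμmass]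
    show (T.toNNReal)⁻¹ * (T.toNNReal • Plim.toFiniteMeasure) s = Plim s
    rw [FiniteMeasure.smul_apply, smul_eq_mul, inv_mul_cancel_left₀ hTnn,
      ProbabilityMeasure.coeFn_toFiniteMeasure]
  have htend : Tendsto (μ ∘ φ) atTop (𝓝 μlim) := by
    apply FiniteMeasure.tendsto_of_tendsto_normalize_testAgainstNN_of_tendsto_mass
    · rw [hnormalize]
      exact hPlim
    · rw [hμmass]
      have : (fun i => (μ (φ i)).mass) = fun _ => T.toNNReal := funext fun i => hmass (φ i)
      rw [show ((fun i => ((μ ∘ φ) i).mass)) = fun _ => T.toNNReal from funext fun i => hmass (φ i)]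
      exact tendsto_const_nhds
  -- the marginal of the limit
  haveI hfin : IsFiniteMeasure (volume.restrict (Set.Icc 0 T) : Measure ℝ) := by
    constructor
    rw [Measure.restrict_apply_univ, Real.volume_Icc]
    exact ENNReal.ofReal_lt_top
  let Fconst : FiniteMeasure ℝ := ⟨volume.restrict (Set.Icc 0 T), hfin⟩
  have hconstmap : ∀ k, (μ k).map Prod.fst = Fconst := by
    intro k
    apply FiniteMeasure.toMeasure_injective
    rw [FiniteMeasure.toMeasure_map]
    exact hproj k
  have hmapt : Tendsto (fun i => ((μ ∘ φ) i).map Prod.fst) atTop (𝓝 (μlim.map Prod.fst)) :=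
    ((FiniteMeasure.continuous_map continuous_fst).tendsto μlim).comp htend
  have hmapconst : Tendsto (fun i => ((μ ∘ φ) i).map Prod.fst) atTop (𝓝 Fconst) := by
    rw [show (fun i => ((μ ∘ φ) i).map Prod.fst) = fun _ => Fconst from
      funext fun i => hconstmap (φ i)]
    exact tendsto_const_nhds
  have hmarg : μlim.map Prod.fst = Fconst := tendsto_nhds_unique hmapt hmapconst
  refine ⟨φ, hφ, μlim, ?_, htend⟩
  have := congrArg (FiniteMeasure.toMeasure) hmarg
  rwa [FiniteMeasure.toMeasure_map] at this
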